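/- Let X be a G-flow. A generic point of X exists if and only if there is a unique minimal subflow X₀ ⊆ X; in this case X₀ consists precisely of the generic points of X. -/

import Mathlib

open Pointwise

/-- A subflow of a `G`-flow: a closed, `G`-invariant subset. -/
def IsSubflow (G : Type*) [Group G] {X : Type*} [TopologicalSpace X] [MulAction G X]
    (S : Set X) : Prop :=
  IsClosed S ∧ ∀ g : G, ∀ x ∈ S, g • x ∈ S

/-- A minimal subflow: a nonempty subflow with no nonempty proper subflow. -/
def IsMinimalSubflow (G : Type*) [Group G] {X : Type*} [TopologicalSpace X] [MulAction G X]
    (S : Set X) : Prop :=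
  S.Nonempty ∧ IsSubflow G S ∧ ∀ T ⊆ S, T.Nonempty → IsSubflow G T → T = S

/-- A subset `U` of the flow is generic if finitely many `G`-translates of `U` cover `X`. -/
def IsGenericSet (G : Type*) [Group G] {X : Type*} [MulAction G X] (U : Set X) : Prop :=
  ∃ s : Finset G, (Set.univ : Set X) ⊆ ⋃ g ∈ s, g • U

/-- A point is generic if each of its open neighbourhoods is a generic set. -/
def IsGenericPt (G : Type*) [Group G] {X : Type*} [TopologicalSpace X] [MulAction G X]
    (p : X) : Prop :=
  ∀ U : Set X, IsOpen U → p ∈ U → IsGenericSet G U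

section Aux
variable {G X : Type*} [Group G] [TopologicalSpace X] [CompactSpace X]
    [MulAction G X] (hX : ∀ g : G, Continuous fun x : X => g • x)

lemma exists_min (S : Set X) (hS : IsSubflow G S) (hne : S.Nonempty) :
    ∃ M ⊆ S, IsMinimalSubflow G M := by
  have := zorn_superset_nonempty {T : Set X | T ⊆ S ∧ T.Nonempty ∧ IsSubflow G T}
    (fun c hcS hchain hcne => by
      have hclosed : ∀ T ∈ c, IsClosed T := fun T hT => (hcS hT).2.2.1
      have hne' : (⋂₀ c).Nonempty := by
        rw [Set.sInter_eq_iInter]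
        have : Nonempty c := hcne.to_subtype
        apply IsCompact.nonempty_iInter_of_directed_nonempty_isCompact_isClosed
        · rintro ⟨a, ha⟩ ⟨b, hb⟩
          rcases hchain.total ha hb with h | h
          · exact ⟨⟨a, ha⟩, le_refl _, h⟩
          · exact ⟨⟨b, hb⟩, h, le_refl _⟩
        · exact fun i => (hcS i.2).2.1
        · exact fun i => (hclosed i i.2).isCompact
        · exact fun i => hclosed i i.2
      refine ⟨⋂₀ c, ⟨?_, hne', ?_, ?_⟩, fun s hs => Set.sInter_subset_of_mem hs⟩
      · obtain ⟨T, hT⟩ := hcne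
        exact (Set.sInter_subset_of_mem hT).trans (hcS hT).1
      · exact isClosed_sInter fun T hT => hclosed T hT
      · intro g x hx T hT
        exact (hcS hT).2.2.2 g x (hx T hT))
    S ⟨le_refl _, hne, hS⟩
  obtain ⟨M, hMS, hmin⟩ := this
  obtain ⟨hM1, hM2, hM3⟩ := hmin.prop
  exact ⟨M, hM1, hM2, hM3, fun T hTM hTne hTsub =>
    hTM.antisymm (hmin.2 ⟨hTM.trans hM1, hTne, hTsub⟩ hTM)⟩

include hX in
lemma smul_open (g : G) {U : Set X} (hU : IsOpen U) : IsOpen (g • U) := by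
  have : g • U = (fun x : X => g⁻¹ • x) ⁻¹' U := by
    ext x; simp [Set.mem_smul_set_iff_inv_smul_mem]
  rw [this]; exact hU.preimage (hX g⁻¹)

include hX in
lemma generic_iff_meets {U : Set X} (hU : IsOpen U) :
    IsGenericSet G U ↔ ∀ M : Set X, IsMinimalSubflow G M → (M ∩ U).Nonempty := by
  constructor
  · rintro ⟨s, hs⟩ M ⟨⟨x, hx⟩, hMsub, -⟩
    have := hs (Set.mem_univ x)
    simp only [Set.mem_iUnion] at this
    obtain ⟨g, hg, hxg⟩ := this
    exact ⟨g⁻¹ • x, hMsub.2 g⁻¹ x hx, Set.mem_smul_set_iff_inv_smul_mem.mp hxg⟩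
  · intro h
    have hY : {x : X | ∀ g : G, g • x ∉ U} = ∅ := by
      by_contra hne
      obtain ⟨M, hMY, hM⟩ := exists_min {x : X | ∀ g : G, g • x ∉ U}
        ⟨by
          have : {x : X | ∀ g : G, g • x ∉ U} = ⋂ g : G, (fun x : X => g • x) ⁻¹' Uᶜ := by
            ext x; simp
          rw [this]
          exact isClosed_iInter fun g => hU.isClosed_compl.preimage (hX g),
         fun g x hx h' hmem => hx (h' * g) (by rw [mul_smul]; exact hmem)⟩
        (Set.nonempty_iff_ne_empty.mpr hne)
      obtain ⟨y, hyM, hyU⟩ := h M hM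
      exact (hMY hyM) 1 (by simpa using hyU)
    have hcover : (Set.univ : Set X) ⊆ ⋃ g : G, g • U := by
      intro x _
      have hx : x ∉ {x : X | ∀ g : G, g • x ∉ U} := by
        rw [hY]; exact Set.notMem_empty x
      simp only [Set.mem_setOf_eq, not_forall, not_not] at hx
      obtain ⟨g, hg⟩ := hx
      exact Set.mem_iUnion.mpr ⟨g⁻¹, Set.mem_smul_set_iff_inv_smul_mem.mpr (by simpa using hg)⟩
    obtain ⟨t, ht⟩ := isCompact_univ.elim_finite_subcover (fun g : G => g • U)
      (fun g => smul_open hX g hU) hcover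
    exact ⟨t, ht⟩

include hX in
lemma genericPt_iff {p : X} :
    IsGenericPt G p ↔ ∀ M : Set X, IsMinimalSubflow G M → p ∈ M := by
  constructor
  · intro hp M hM
    by_contra hpM
    have := (generic_iff_meets hX hM.2.1.1.isOpen_compl).mp (hp Mᶜ hM.2.1.1.isOpen_compl hpM)
      M hM
    obtain ⟨y, hy1, hy2⟩ := this
    exact hy2 hy1
  · intro h U hU hpU
    exact (generic_iff_meets hX hU).mpr fun M hM => ⟨p, h M hM, hpU⟩

lemma min_eq_of_inter {M N : Set X} (hM : IsMinimalSubflow G M) (hN : IsMinimalSubflow G N)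
    (hne : (M ∩ N).Nonempty) : M = N := by
  have hsub : IsSubflow G (M ∩ N) :=
    ⟨hM.2.1.1.inter hN.2.1.1, fun g x hx => ⟨hM.2.1.2 g x hx.1, hN.2.1.2 g x hx.2⟩⟩
  have h1 := hM.2.2 (M ∩ N) Set.inter_subset_left hne hsub
  have h2 := hN.2.2 (M ∩ N) Set.inter_subset_right hne hsub
  exact h1.symm.trans h2

end Aux


theorem stmt2 {G X : Type*} [Group G] [TopologicalSpace X] [CompactSpace X] [T2Space X]
    [MulAction G X] (hX : ∀ g : G, Continuous fun x : X => g • x) :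
    ((∃ p : X, IsGenericPt G p) ↔ (∃! S : Set X, IsMinimalSubflow G S)) ∧
      (∀ S : Set X, IsMinimalSubflow G S → (∃! T : Set X, IsMinimalSubflow G T) →
        S = {p : X | IsGenericPt G p}) := by

  constructor
  · constructor
    · rintro ⟨p, hp⟩
      obtain ⟨M, -, hM⟩ := exists_min (G := G) (Set.univ : Set X)
        ⟨isClosed_univ, fun _ _ _ => Set.mem_univ _⟩ ⟨p, Set.mem_univ p⟩
      refine ⟨M, hM, fun N hN => ?_⟩
      exact (min_eq_of_inter hN hM ⟨p, (genericPt_iff hX).mp hp N hN,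
        (genericPt_iff hX).mp hp M hM⟩)
    · rintro ⟨S, hS, huniq⟩
      obtain ⟨p, hp⟩ := hS.1
      exact ⟨p, (genericPt_iff hX).mpr fun M hM => (huniq M hM) ▸ hp⟩
  · rintro S hS ⟨T, hT, huniq⟩
    ext p
    simp only [Set.mem_setOf_eq]
    rw [genericPt_iff hX]
    constructor
    · intro hp M hM
      rw [huniq M hM, ← huniq S hS]; exact hp
    · intro h
      exact h S hS
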